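/- Any weak* accumulation point μ of a sequence of equilibrium states μ_n ∈ ES(β_n φ) with β_n → ∞ (i.e., any ground state of φ) satisfies h_μ(f) = h_{∞,φ}, where h_{∞,φ} = sup{h_ν(f) : ν maximizes ∫φ dν over M}. -/

import Mathlib

open MeasureTheory

/-- The set of `f`-invariant Borel probability measures. -/
def invP {X : Type*} [TopologicalSpace X] [MeasurableSpace X] (f : X → X) :
    Set (ProbabilityMeasure X) :=
  {μ | (μ : Measure X).map f = (μ : Measure X)}

/-- Equilibrium states of `ψ` for the (abstract) entropy function `h`. -/
def eqStatesP {X : Type*} [TopologicalSpace X] [MeasurableSpace X] (f : X → X)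
    (h : ProbabilityMeasure X → ℝ) (ψ : X → ℝ) : Set (ProbabilityMeasure X) :=
  {μ ∈ invP f | ∀ ν ∈ invP f,
    h ν + ∫ x, ψ x ∂(ν : Measure X) ≤ h μ + ∫ x, ψ x ∂(μ : Measure X)}

/-- Any weak* accumulation point `μ` of a sequence of equilibrium states
`μ_n ∈ ES(β_n φ)` with `β_n → ∞` (i.e. any ground state of `φ`) satisfies
`h_μ(f) = h_{∞,φ}`, where `h_{∞,φ} = sup {h_ν(f) : ν maximizes ∫ φ dν over M}`.
The entropy map is assumed upper semi-continuous (e.g. an SFT). -/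
theorem statement5 {X : Type*} [MetricSpace X] [CompactSpace X]
    [MeasurableSpace X] [BorelSpace X]
    (f : X → X) (hf : Continuous f)
    (h : ProbabilityMeasure X → ℝ)
    (husc : UpperSemicontinuousOn h (invP f))
    (φ : C(X, ℝ)) (bφ : ℝ)
    (hb : IsGreatest ((fun μ : ProbabilityMeasure X => ∫ x, φ x ∂(μ : Measure X)) '' invP f) bφ)
    (β : ℕ → ℝ) (hβpos : ∀ n, 0 < β n)
    (hβtop : Filter.Tendsto β Filter.atTop Filter.atTop)
    (μseq : ℕ → ProbabilityMeasure X)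
    (hES : ∀ n, μseq n ∈ eqStatesP f h (fun x => β n * φ x))
    (μ : ProbabilityMeasure X) (hμ : μ ∈ invP f)
    (hcluster : MapClusterPt μ Filter.atTop μseq) :
    h μ = sSup (h '' {ν ∈ invP f | ∫ x, φ x ∂(ν : Measure X) = bφ}) := by
  classical
  set I : ProbabilityMeasure X → ℝ := fun ν => ∫ x, φ x ∂(ν : Measure X) with hIdef
  -- continuity of the integral functional
  have hIcont : ContinuousAt I μ := by
    have := (MeasureTheory.ProbabilityMeasure.tendsto_iff_forall_integral_tendsto
      (μs := (id : ProbabilityMeasure X → ProbabilityMeasure X)) (μ := μ)).mp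
      Filter.tendsto_id (BoundedContinuousFunction.mkOfCompact φ)
    simpa [ContinuousAt, hIdef] using this
  -- all integrals are ≤ bφ on invariant measures
  have Iub : ∀ ν ∈ invP f, I ν ≤ bφ := fun ν hν => hb.2 ⟨ν, hν, rfl⟩
  have hinv : ∀ n, μseq n ∈ invP f := fun n => (hES n).1
  -- key frequent statement
  have hfreq : ∀ ε > (0:ℝ), ∃ᶠ n in Filter.atTop,
      h (μseq n) < h μ + ε ∧ |I (μseq n) - I μ| < ε := by
    intro ε hε
    have E1 : ∀ᶠ ν in nhds μ, ν ∈ invP f → h ν < h μ + ε := by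
      have := husc μ hμ (h μ + ε) (by linarith)
      rwa [eventually_nhdsWithin_iff] at this
    have E2 : ∀ᶠ ν in nhds μ, |I ν - I μ| < ε := by
      have := Metric.tendsto_nhds.mp hIcont ε hε
      simpa [Real.dist_eq] using this
    have E := E1.and E2
    have := (mapClusterPt_iff_frequently.mp hcluster) _ E
    exact this.mono (fun n hn => ⟨hn.1 (hinv n), hn.2⟩)
  -- h ν ≤ h μ for every maximizing ν
  have hub : ∀ ν ∈ invP f, I ν = bφ → h ν ≤ h μ := by
    intro ν hν hνmax
    have h1 : ∀ n, h ν ≤ h (μseq n) := by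
      intro n
      have := (hES n).2 ν hν
      rw [MeasureTheory.integral_const_mul, MeasureTheory.integral_const_mul] at this
      have h2 : β n * I (μseq n) ≤ β n * bφ :=
        mul_le_mul_of_nonneg_left (Iub _ (hinv n)) (hβpos n).le
      have h3 : (∫ x, φ x ∂(ν : Measure X)) = bφ := hνmax
      have h4 : I (μseq n) = ∫ x, φ x ∂((μseq n) : Measure X) := rfl
      have hA : β n * (∫ x, φ x ∂(ν : Measure X)) = β n * bφ := by rw [h3]
      have hB : β n * I (μseq n) = β n * (∫ x, φ x ∂((μseq n) : Measure X)) := by rw [h4]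
      linarith [this, h2, hA, hB]
    refine le_of_forall_pos_le_add ?_
    intro ε hε
    obtain ⟨n, hn, -⟩ := (hfreq ε hε).exists
    exact (h1 n).trans hn.le
  -- μ is maximizing
  have hμmax : I μ = bφ := by
    have hle : I μ ≤ bφ := Iub μ hμ
    obtain ⟨ν₀, hν₀inv, hν₀⟩ := hb.1
    refine le_antisymm hle (le_of_forall_pos_le_add ?_)
    intro ε hε
    have hε2 : (0:ℝ) < ε / 2 := by linarith
    set C : ℝ := max (h μ + ε / 2 - h ν₀) (ε / 2) with hCdef
    have hCpos : 0 < C := lt_max_of_lt_right hε2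
    have hβbig : ∀ᶠ n in Filter.atTop, C / (ε / 2) ≤ β n :=
      hβtop.eventually_ge_atTop _
    obtain ⟨n, ⟨hn1, hn2⟩, hn3⟩ := ((hfreq (ε/2) hε2).and_eventually hβbig).exists
    -- equilibrium inequality against ν₀
    have heq := (hES n).2 ν₀ hν₀inv
    rw [MeasureTheory.integral_const_mul, MeasureTheory.integral_const_mul] at heq
    have hν₀' : (∫ x, φ x ∂(ν₀ : Measure X)) = bφ := hν₀
    -- β n * (bφ - I (μseq n)) ≤ h (μseq n) - h ν₀ < C
    have h4 : β n * (bφ - I (μseq n)) < C := by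
      have hC1 : h (μseq n) - h ν₀ < C :=
        lt_of_lt_of_le (by linarith) (le_max_left _ _)
      have h4 : I (μseq n) = ∫ x, φ x ∂((μseq n) : Measure X) := rfl
      have hA : β n * (∫ x, φ x ∂(ν₀ : Measure X)) = β n * bφ := by rw [hν₀']
      have hB : β n * I (μseq n) = β n * (∫ x, φ x ∂((μseq n) : Measure X)) := by rw [h4]
      nlinarith [heq, hC1, hA, hB]
    have h5 : C ≤ β n * (ε / 2) := by
      have := mul_le_mul_of_nonneg_right hn3 hε2.le
      rwa [div_mul_cancel₀ _ (ne_of_gt hε2)] at this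
    have h6 : bφ - I (μseq n) ≤ ε / 2 := by
      have h7 : β n * (bφ - I (μseq n)) ≤ β n * (ε / 2) := le_trans h4.le h5
      exact le_of_mul_le_mul_left h7 (hβpos n)
    have h8 : I (μseq n) - I μ < ε / 2 := (abs_lt.mp hn2).2
    linarith
  -- conclude
  have hg : IsGreatest (h '' {ν ∈ invP f | ∫ x, φ x ∂(ν : Measure X) = bφ}) (h μ) := by
    constructor
    · exact ⟨μ, ⟨hμ, hμmax⟩, rfl⟩
    · rintro _ ⟨ν, ⟨hν1, hν2⟩, rfl⟩
      exact hub ν hν1 hν2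
  exact hg.csSup_eq.symm
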